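/- Let m ≥ 3 be odd, ω = e^{2πi/m}, q = 2cos(π/(2m)). For f(x_1,x_2) = A x_1 x_2 + B x_1 + C x_2 with A,B,C ∈ Z/mZ, the sum S(f) = (1/4) Σ_{x_1,x_2 ∈ {-1,1}} x_1 x_2 ω^{f(x)} satisfies |S(f)| ≤ q/2, with the maximum attained when B = C = 0 and A = ±⌊(m+1)/4⌋. -/

import Mathlib

/-- The two-variable normalized sum
`S(f) = (1/4) Σ_{x₁,x₂ ∈ {-1,1}} x₁ x₂ ω^{A x₁ x₂ + B x₁ + C x₂}`. -/
noncomputable def twoVarSum (m : ℕ) (A B C : ZMod m) : ℂ :=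
  (1 / 4) * ∑ x : Bool × Bool,
    (((if x.1 then (1 : ℤ) else -1) * (if x.2 then (1 : ℤ) else -1) : ℤ) : ℂ) *
      Complex.exp (2 * (Real.pi : ℂ) * Complex.I *
        (((A.val : ℤ) * (if x.1 then (1 : ℤ) else -1) * (if x.2 then (1 : ℤ) else -1) +
            (B.val : ℤ) * (if x.1 then (1 : ℤ) else -1) +
            (C.val : ℤ) * (if x.2 then (1 : ℤ) else -1) : ℤ) : ℂ) / (m : ℂ))

open Real


lemma keyhalf (m : ℕ) (hm : 3 ≤ m) (r : ℤ) (h0 : 0 ≤ r) (h1 : 2*r ≤ (m:ℤ) - 1) :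
    -Real.cos (π/m) ≤ Real.cos (2*π*r/m) := by
  have hmR : (0:ℝ) < m := by positivity
  have hr0 : (0:ℝ) ≤ r := by exact_mod_cast h0
  have hrm : (2*(r:ℝ) ≤ (m:ℝ) - 1) := by exact_mod_cast h1
  have h2 : Real.cos (π - π/m) = -Real.cos (π/m) := Real.cos_pi_sub _
  rw [← h2]
  apply Real.cos_le_cos_of_nonneg_of_le_pi
  · positivity
  · have : π/m > 0 := by positivity
    linarith [Real.pi_pos]
  · rw [div_le_iff₀ hmR] at *
    have hπ : 0 < π := Real.pi_pos
    rw [sub_mul, div_mul_cancel₀ _ (ne_of_gt hmR)]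
    nlinarith

lemma key (m : ℕ) (hm : 3 ≤ m) (hodd : Odd m) (k : ℤ) :
    -Real.cos (π/m) ≤ Real.cos (2*π*k/m) := by
  have hm0 : (m:ℤ) ≠ 0 := by omega
  have hmR : (0:ℝ) < m := by positivity
  have hmne : (m:ℝ) ≠ 0 := ne_of_gt hmR
  have h0 : 0 ≤ k % (m:ℤ) := Int.emod_nonneg k hm0
  have h1 : k % (m:ℤ) < m := Int.emod_lt_of_pos k (by omega)
  have hsplit : k = (m:ℤ) * (k / m) + k % m := (Int.mul_ediv_add_emod k m).symm
  have hkR : (k:ℝ) = (m:ℝ) * ((k / (m:ℤ) : ℤ) : ℝ) + ((k % (m:ℤ) : ℤ) : ℝ) := by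
    exact_mod_cast congrArg (fun z : ℤ => (z : ℝ)) hsplit
  have hcos : Real.cos (2*π*k/m) = Real.cos (2*π*((k % (m:ℤ) : ℤ):ℝ)/m) := by
    have harg : (2*π*(k:ℝ)/m) = 2*π*((k % (m:ℤ) : ℤ):ℝ)/m + ((k / (m:ℤ) : ℤ) : ℝ) * (2*π) := by
      rw [hkR]; field_simp; ring
    rw [harg]
    exact_mod_cast Real.cos_add_int_mul_two_pi _ (k / (m:ℤ))
  rw [hcos]
  rcases lt_or_gt_of_ne (show 2*(k % (m:ℤ)) ≠ (m:ℤ) by rcases hodd with ⟨t, ht⟩; omega) with h | h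
  · exact keyhalf m hm _ h0 (by omega)
  · have h2 : Real.cos (2*π*((k % (m:ℤ) : ℤ):ℝ)/m) = Real.cos (2*π*(((m:ℤ)-(k % (m:ℤ)) : ℤ):ℝ)/m) := by
      rw [← Real.cos_two_pi_sub]
      congr 1
      push_cast
      field_simp
    rw [h2]
    exact keyhalf m hm _ (by omega) (by omega)

lemma quad (u v w d : ℝ) (hu1 : -d ≤ u) (hu2 : u ≤ 1) (hv1 : -d ≤ v) (hv2 : v ≤ 1)
    (hw1 : -d ≤ w) (hw2 : w ≤ 1) (hd0 : 0 ≤ d) (hd1 : d ≤ 1) :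
    u^2 + v^2 - 2*u*v*w ≤ 2 + 2*d := by
  rcases le_or_gt 0 (u*v) with h | h
  · have huu : u^2 ≤ 1 := by nlinarith
    have hvv : v^2 ≤ 1 := by nlinarith
    have huv : u*v ≤ 1 := by nlinarith [sq_nonneg (u-v)]
    nlinarith [mul_nonneg h (by linarith : (0:ℝ) ≤ w + d),
      mul_nonneg hd0 (by linarith : (0:ℝ) ≤ 1 - u*v)]
  · have hstep : u^2 + v^2 - 2*u*v*w ≤ u^2 + v^2 - 2*u*v := by
      nlinarith [mul_nonneg (neg_nonneg.mpr h.le) (by linarith : (0:ℝ) ≤ 1 - w)]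
    have hd2 : d^2 ≤ 1 := by nlinarith
    rcases le_or_gt u 0 with hu | hu
    · have hv : 0 < v := by nlinarith
      have h1 : v - u ≤ 1 + d := by linarith
      have h2 : (0:ℝ) ≤ v - u := by linarith
      nlinarith [mul_nonneg (by linarith : (0:ℝ) ≤ 1 + d - (v-u)) (by linarith : (0:ℝ) ≤ 1 + d + (v-u))]
    · have hv : v < 0 := by nlinarith
      have h1 : u - v ≤ 1 + d := by linarith
      have h2 : (0:ℝ) ≤ u - v := by linarith
      nlinarith [mul_nonneg (by linarith : (0:ℝ) ≤ 1 + d - (u-v)) (by linarith : (0:ℝ) ≤ 1 + d + (u-v))]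

lemma formula (m : ℕ) [NeZero m] (A B C : ZMod m) :
    twoVarSum m A B C =
      ↑((Real.cos (2*π*((A.val:ℝ)+B.val+C.val)/m) - Real.cos (2*π*(-(A.val:ℝ)+B.val-C.val)/m)
        - Real.cos (2*π*(-(A.val:ℝ)-B.val+C.val)/m) + Real.cos (2*π*((A.val:ℝ)-B.val-C.val)/m))/4)
      + ↑((Real.sin (2*π*((A.val:ℝ)+B.val+C.val)/m) - Real.sin (2*π*(-(A.val:ℝ)+B.val-C.val)/m)
        - Real.sin (2*π*(-(A.val:ℝ)-B.val+C.val)/m) + Real.sin (2*π*((A.val:ℝ)-B.val-C.val)/m))/4) * Complex.I := by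
  have hm : (m:ℂ) ≠ 0 := Nat.cast_ne_zero.mpr (NeZero.ne m)
  have key : ∀ n : ℤ, Complex.exp (2 * (Real.pi : ℂ) * Complex.I * ((n:ℤ) : ℂ) / (m : ℂ))
      = ↑(Real.cos (2*π*(n:ℝ)/m)) + ↑(Real.sin (2*π*(n:ℝ)/m)) * Complex.I := by
    intro n
    rw [show 2 * (Real.pi : ℂ) * Complex.I * ((n:ℤ) : ℂ) / (m : ℂ)
        = ((2*π*(n:ℝ)/m : ℝ) : ℂ) * Complex.I by push_cast; field_simp]
    rw [Complex.exp_mul_I, ← Complex.ofReal_cos, ← Complex.ofReal_sin]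
  unfold twoVarSum
  rw [Fintype.sum_prod_type]
  simp only [Fintype.sum_bool, if_true, if_false]
  rw [key, key, key, key]
  push_cast
  ring

set_option maxHeartbeats 2000000 in
theorem stmt_13 (m : ℕ) [NeZero m] (hm : 3 ≤ m) (hodd : Odd m) (A B C : ZMod m) :
    ‖twoVarSum m A B C‖ ≤ 2 * Real.cos (Real.pi / (2 * m)) / 2 ∧
      (B = 0 → C = 0 → (A = (((m + 1) / 4 : ℕ) : ZMod m) ∨ A = -(((m + 1) / 4 : ℕ) : ZMod m)) →
        ‖twoVarSum m A B C‖ = 2 * Real.cos (Real.pi / (2 * m)) / 2) := by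
  have hmR : (0:ℝ) < m := by positivity
  have hmne : (m:ℝ) ≠ 0 := ne_of_gt hmR
  have hπ : 0 < π := Real.pi_pos
  set q : ℝ := Real.cos (π / (2 * m)) with hq
  set d : ℝ := Real.cos (π / m) with hd
  have hm3 : (3:ℝ) ≤ (m:ℝ) := by exact_mod_cast hm
  have hq0 : 0 ≤ q := by
    apply Real.cos_nonneg_of_mem_Icc
    constructor
    · have : 0 < π / (2 * (m:ℝ)) := by positivity
      linarith
    · rw [div_le_div_iff₀ (by positivity) (by norm_num)]
      nlinarith
  have hd0 : 0 ≤ d := by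
    apply Real.cos_nonneg_of_mem_Icc
    constructor
    · have : 0 < π / (m:ℝ) := by positivity
      linarith
    · rw [div_le_div_iff₀ (by positivity) (by norm_num)]
      nlinarith
  have hd1 : d ≤ 1 := Real.cos_le_one _
  have hqsq : 4 * q^2 = 2 + 2*d := by
    rw [hq, Real.cos_sq, hd, show 2*(π/(2*(m:ℝ))) = π/m by field_simp]
    ring
  -- abbreviations
  set a : ℝ := (A.val : ℝ)
  set b : ℝ := (B.val : ℝ)
  set c : ℝ := (C.val : ℝ)
  set α : ℝ := 2*π*a/m with hα
  set β : ℝ := 2*π*(b+c)/m with hβ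
  set γ : ℝ := 2*π*(b-c)/m with hγ
  set u : ℝ := Real.cos β with hu
  set v : ℝ := Real.cos γ with hv
  set X : ℝ := (Real.cos (2*π*(a+b+c)/m) - Real.cos (2*π*(-a+b-c)/m)
        - Real.cos (2*π*(-a-b+c)/m) + Real.cos (2*π*(a-b-c)/m))/4 with hX
  set Y : ℝ := (Real.sin (2*π*(a+b+c)/m) - Real.sin (2*π*(-a+b-c)/m)
        - Real.sin (2*π*(-a-b+c)/m) + Real.sin (2*π*(a-b-c)/m))/4 with hY
  have habs : ‖twoVarSum m A B C‖ = Real.sqrt (X^2 + Y^2) := by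
    rw [formula m A B C, Complex.norm_add_mul_I]
  have e1 : 2*π*(a+b+c)/m = α + β := by rw [hα, hβ]; field_simp; ring
  have e2 : 2*π*(-a+b-c)/m = -α + γ := by rw [hα, hγ]; field_simp; ring
  have e3 : 2*π*(-a-b+c)/m = -(α + γ) := by rw [hα, hγ]; field_simp; ring
  have e4 : 2*π*(a-b-c)/m = α - β := by rw [hα, hβ]; field_simp; ring
  have hXe : X = Real.cos α * (u - v) / 2 := by
    rw [hX, e1, e2, e3, e4]
    simp only [Real.cos_neg, Real.sin_neg, Real.cos_add, Real.cos_sub, Real.sin_add,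
      Real.sin_sub]
    rw [hu, hv]
    ring
  have hYe : Y = Real.sin α * (u + v) / 2 := by
    rw [hY, e1, e2, e3, e4]
    simp only [Real.cos_neg, Real.sin_neg, Real.cos_add, Real.cos_sub, Real.sin_add,
      Real.sin_sub]
    rw [hu, hv]
    ring
  have pyth := Real.sin_sq_add_cos_sq α
  -- the key bounds
  have hub : -d ≤ u := by
    have := key m hm hodd ((B.val : ℤ) + (C.val : ℤ))
    rw [hu, hβ]
    convert this using 3
    push_cast
    ring
  have hvb : -d ≤ v := by
    have := key m hm hodd ((B.val : ℤ) - (C.val : ℤ))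
    rw [hv, hγ]
    convert this using 3
    push_cast
    ring
  have hwb : -d ≤ 2 * Real.cos α ^ 2 - 1 := by
    have h := key m hm hodd (2 * (A.val : ℤ))
    have harg : 2*π*((2 * (A.val : ℤ) : ℤ):ℝ)/m = 2 * α := by
      rw [hα, Int.cast_mul, Int.cast_ofNat, Int.cast_natCast]
      ring
    rw [harg, Real.cos_two_mul] at h
    exact h
  have hwb2 : 2 * Real.cos α ^ 2 - 1 ≤ 1 := by nlinarith [Real.cos_le_one α, Real.neg_one_le_cos α]
  have hmain : X^2 + Y^2 ≤ q^2 := by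
    have hq2 := quad u v (2 * Real.cos α ^ 2 - 1) d hub (Real.cos_le_one β) hvb
      (Real.cos_le_one γ) hwb hwb2 hd0 hd1
    have hexp : 4*(X^2+Y^2) = u^2 + v^2 - 2*u*v*(2 * Real.cos α ^ 2 - 1) := by
      rw [hXe, hYe]
      linear_combination ((u+v)^2) * pyth
    linarith [hq2, hqsq, hexp]
  constructor
  · rw [habs, show 2*q/2 = q by ring]
    calc Real.sqrt (X^2+Y^2) ≤ Real.sqrt (q^2) := Real.sqrt_le_sqrt hmain
    _ = q := Real.sqrt_sq hq0
  · -- equality case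
    intro hB hC hA
    subst hB hC
    have hb0 : b = 0 := by simp [b, ZMod.val_zero]
    have hc0 : c = 0 := by simp [c, ZMod.val_zero]
    set t : ℕ := (m+1)/4 with ht
    have ht1 : 1 ≤ t := by rw [ht]; omega
    have htm : t < m := by rw [ht]; omega
    have h4t : 4*t = m - 1 ∨ 4*t = m + 1 := by
      rcases hodd with ⟨s, hs⟩
      rw [ht]; omega
    have hsin : |Real.sin (2*π*(t:ℝ)/m)| = q := by
      rcases h4t with h | h
      · have htR : (t:ℝ) = ((m:ℝ)-1)/4 := by
          have : (4*t : ℕ) = ((m:ℕ) - 1 : ℕ) := h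
          have h4 : (4:ℝ)*(t:ℝ) = (m:ℝ) - 1 := by
            have := congrArg (fun n : ℕ => (n:ℝ)) this
            push_cast [Nat.cast_sub (by omega : 1 ≤ m)] at this
            linarith
          linarith
        rw [show 2*π*(t:ℝ)/m = π/2 - π/(2*m) by rw [htR]; field_simp; ring,
          Real.sin_pi_div_two_sub]
        exact abs_of_nonneg hq0
      · have htR : (t:ℝ) = ((m:ℝ)+1)/4 := by
          have h4 : (4:ℝ)*(t:ℝ) = (m:ℝ) + 1 := by exact_mod_cast congrArg (fun n : ℕ => (n:ℝ)) h
          linarith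
        rw [show 2*π*(t:ℝ)/m = π/2 - (-(π/(2*m))) by rw [htR]; field_simp; ring,
          Real.sin_pi_div_two_sub, Real.cos_neg]
        exact abs_of_nonneg hq0
    have hval : a = (t:ℝ) ∨ a = (m:ℝ) - (t:ℝ) := by
      rcases hA with h | h
      · left
        simp only [a, h]
        rw [ZMod.val_cast_of_lt htm]
      · right
        simp only [a, h]
        have htne : ((t : ZMod m)) ≠ 0 := by
          intro hcontra
          have := congrArg ZMod.val hcontra
          rw [ZMod.val_cast_of_lt htm, ZMod.val_zero] at this
          omega
        rw [ZMod.neg_val, if_neg htne, ZMod.val_cast_of_lt htm,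
          Nat.cast_sub (le_of_lt htm)]
    have hXzero : X = 0 := by
      rw [hXe]
      have : u = v := by rw [hu, hv, hβ, hγ, hb0, hc0]; norm_num
      rw [this]; ring
    have hYval : |Y| = q := by
      have hβ0 : β = 0 := by rw [hβ, hb0, hc0]; ring_nf
      have hγ0 : γ = 0 := by rw [hγ, hb0, hc0]; ring_nf
      have hu0 : u = 1 := by rw [hu, hβ0, Real.cos_zero]
      have hv0 : v = 1 := by rw [hv, hγ0, Real.cos_zero]
      have hYsin : Y = Real.sin α := by rw [hYe, hu0, hv0]; ring
      rw [hYsin]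
      rcases hval with h | h
      · rw [hα, h]; exact hsin
      · rw [hα, h, show 2*π*((m:ℝ)-(t:ℝ))/m = 2*π - 2*π*(t:ℝ)/m by field_simp,
          Real.sin_two_pi_sub, abs_neg]
        exact hsin
    rw [habs, hXzero, show (0:ℝ)^2 + Y^2 = Y^2 by ring, Real.sqrt_sq_eq_abs, hYval]
    ring
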